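/- Let E be a Hilbert A-module with δ closed, δ² = 0, and δ + δ* self-adjoint. Then Im(δ) and Ker(δ*) are orthogonal, and every ξ ∈ Ker(δ + δ*) satisfies ξ ∈ Ker(δ) ∩ Ker(δ*). Consequently, if additionally Im(δ) = Ker(δ), then Ker(δ + δ*) = {0}. -/

import Mathlib

open LinearPMap

/-- (Hilbert module specialised to a Hilbert space, i.e. `A = ℂ`.)
Let `δ` be a densely defined closed operator with `δ² = 0` and `δ + δ*` self-adjoint.
Then `Im(δ)` and `Ker(δ*)` are orthogonal, every `ξ ∈ Ker(δ + δ*)` lies in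
`Ker(δ) ∩ Ker(δ*)`, and if moreover `Im(δ) = Ker(δ)` then `Ker(δ + δ*) = {0}`. -/
theorem ker_of_delta_plus_adjoint
    {E : Type*} [NormedAddCommGroup E] [InnerProductSpace ℂ E] [CompleteSpace E]
    (δ : E →ₗ.[ℂ] E)
    (hdense : Dense (δ.domain : Set E))
    (hclosed : δ.IsClosed)
    (hIm : ∀ x : δ.domain, δ x ∈ δ.domain)
    (hsq : ∀ (x : δ.domain) (h : δ x ∈ δ.domain), δ ⟨δ x, h⟩ = 0)
    (hsa : IsSelfAdjoint (δ + δ†)) :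
    -- `Im(δ) ⟂ Ker(δ*)`
    (∀ (x : δ.domain) (ν : (δ†).domain), δ† ν = 0 → (inner ℂ (δ x) (ν : E) : ℂ) = 0) ∧
    -- every `ξ ∈ Ker(δ + δ*)` lies in `Ker δ ∩ Ker δ*`
    (∀ (ξ : E) (h1 : ξ ∈ δ.domain) (h2 : ξ ∈ (δ†).domain),
      δ ⟨ξ, h1⟩ + δ† ⟨ξ, h2⟩ = 0 → δ ⟨ξ, h1⟩ = 0 ∧ δ† ⟨ξ, h2⟩ = 0) ∧
    -- if `Im(δ) = Ker(δ)` then `Ker(δ + δ*) = {0}`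
    ({x : E | ∃ y : δ.domain, δ y = x} = {x : E | ∃ hx : x ∈ δ.domain, δ ⟨x, hx⟩ = 0} →
      ∀ (ξ : E) (h1 : ξ ∈ δ.domain) (h2 : ξ ∈ (δ†).domain),
        δ ⟨ξ, h1⟩ + δ† ⟨ξ, h2⟩ = 0 → ξ = 0) := by
  have hfa := LinearPMap.adjoint_isFormalAdjoint hdense
  -- Part 1
  have h1 : ∀ (x : δ.domain) (ν : (δ†).domain), δ† ν = 0 →
      (inner ℂ (δ x) (ν : E) : ℂ) = 0 := by
    intro x ν hν
    have := hfa ν x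
    rw [hν, inner_zero_left] at this
    rw [← inner_conj_symm, ← this]; simp
  -- Part 2
  have h2 : ∀ (ξ : E) (h1 : ξ ∈ δ.domain) (h2 : ξ ∈ (δ†).domain),
      δ ⟨ξ, h1⟩ + δ† ⟨ξ, h2⟩ = 0 → δ ⟨ξ, h1⟩ = 0 ∧ δ† ⟨ξ, h2⟩ = 0 := by
    intro ξ hξ1 hξ2 hker
    have hδξ : δ ⟨ξ, hξ1⟩ = 0 := by
      have hortho : (inner ℂ (δ† ⟨ξ, hξ2⟩) (δ ⟨ξ, hξ1⟩) : ℂ) = 0 := by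
        have := hfa ⟨ξ, hξ2⟩ ⟨δ ⟨ξ, hξ1⟩, hIm ⟨ξ, hξ1⟩⟩
        rw [hsq ⟨ξ, hξ1⟩ (hIm ⟨ξ, hξ1⟩), inner_zero_right] at this
        exact this
      have : (inner ℂ (δ ⟨ξ, hξ1⟩ + δ† ⟨ξ, hξ2⟩) (δ ⟨ξ, hξ1⟩) : ℂ)
          = inner ℂ (δ ⟨ξ, hξ1⟩) (δ ⟨ξ, hξ1⟩) := by
        rw [inner_add_left, hortho, add_zero]
      rw [hker, inner_zero_left] at this
      exact inner_self_eq_zero.mp this.symm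
    refine ⟨hδξ, ?_⟩
    have := hker
    rw [hδξ, zero_add] at this
    exact this
  refine ⟨h1, h2, ?_⟩
  -- Part 3
  intro him ξ hξ1 hξ2 hker
  obtain ⟨hδξ, hδaξ⟩ := h2 ξ hξ1 hξ2 hker
  have : ξ ∈ {x : E | ∃ y : δ.domain, δ y = x} := by
    rw [him]; exact ⟨hξ1, hδξ⟩
  obtain ⟨y, hy⟩ := this
  have := h1 y ⟨ξ, hξ2⟩ hδaξ
  rw [hy] at this
  exact inner_self_eq_zero.mp this
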